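/- With R_p = pZ_{n/p} ⊆ Z/nZ and the symmetry relation as defined (equal distance to nearest restricted position in the indicated direction), the relation is invariant under the step operator: if (x, d_x) and (y, d_y) are symmetric and magnitude m is applied, then (x + d_x·m, d_x) and (y + d_y·m, d_y) are again symmetric. -/
import Mathlib


/-- The symmetry relation (equal cyclic distance to the nearest element of
`R_p = pZ_{n/p}` in the indicated direction) is invariant under the step
operator: if `(x, d_x)` and `(y, d_y)` are symmetric and a magnitude `m` is
applied, then `(x + d_x·m, d_x)` and `(y + d_y·m, d_y)` are again symmetric. -/
theorem stmt_11 (n p : ℕ) (hn : 3 ≤ n) (hp : 0 < p) (hpn : p ∣ n)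
    (R : Set (ZMod n)) (hR : R = {z : ZMod n | ∃ k : ℕ, k < n / p ∧ z = (k * p : ℕ)})
    (x y : ZMod n) (dx dy : ℤ) (hdx : dx = 1 ∨ dx = -1) (hdy : dy = 1 ∨ dy = -1)
    (δ : ℕ)
    (hxδ : x + (dx : ZMod n) * (δ : ZMod n) ∈ R)
    (hxmin : ∀ j : ℕ, j < δ → x + (dx : ZMod n) * (j : ZMod n) ∉ R)
    (hyδ : y + (dy : ZMod n) * (δ : ZMod n) ∈ R)
    (hymin : ∀ j : ℕ, j < δ → y + (dy : ZMod n) * (j : ZMod n) ∉ R)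
    (m : ℕ) :
    ∃ δ' : ℕ,
      (x + (dx : ZMod n) * (m : ZMod n)) + (dx : ZMod n) * (δ' : ZMod n) ∈ R ∧
      (∀ j : ℕ, j < δ' → (x + (dx : ZMod n) * (m : ZMod n)) + (dx : ZMod n) * (j : ZMod n) ∉ R) ∧
      (y + (dy : ZMod n) * (m : ZMod n)) + (dy : ZMod n) * (δ' : ZMod n) ∈ R ∧
      (∀ j : ℕ, j < δ' → (y + (dy : ZMod n) * (m : ZMod n)) + (dy : ZMod n) * (j : ZMod n) ∉ R) := by
  have hn0 : 0 < n := by omega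
  haveI : NeZero n := ⟨by omega⟩
  haveI : NeZero p := ⟨hp.ne'⟩
  set φ : ZMod n →+* ZMod p := ZMod.castHom hpn (ZMod p) with hφ
  -- membership characterization
  have hmem : ∀ z : ZMod n, z ∈ R ↔ φ z = 0 := by
    intro z
    rw [hR]
    constructor
    · rintro ⟨k, hk, rfl⟩
      simp [Nat.cast_mul, map_mul, map_natCast, ZMod.natCast_self]
    · intro h
      have hv : (z.val : ZMod p) = 0 := by
        rwa [ZMod.natCast_val, ← ZMod.castHom_apply (h := hpn)]
      have hdvd : p ∣ z.val := (ZMod.natCast_eq_zero_iff _ _).mp hv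
      refine ⟨z.val / p, ?_, ?_⟩
      · exact Nat.div_lt_div_of_lt_of_dvd hpn (ZMod.val_lt z)
      · rw [Nat.div_mul_cancel hdvd, ZMod.natCast_val, ZMod.cast_id]
  -- offset characterization: z + d*j ∈ R ↔ (j : ZMod p) = c where c depends on z,d
  have hoff : ∀ (z : ZMod n) (d : ℤ), d = 1 ∨ d = -1 → ∀ j : ℕ,
      (z + (d : ZMod n) * (j : ZMod n) ∈ R ↔ (j : ZMod p) = -(d : ZMod p) * φ z) := by
    intro z d hd j
    rw [hmem]
    rcases hd with rfl | rfl
    · push_cast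
      simp only [map_add, map_mul, map_one, one_mul, map_natCast]
      constructor
      · intro h; linear_combination h
      · intro h; linear_combination h
    · push_cast
      simp only [map_add, map_mul, map_neg, map_one, map_natCast, one_mul]
      constructor
      · intro h; linear_combination -h
      · intro h; linear_combination -h
  have hcx : (δ : ZMod p) = -(dx : ZMod p) * φ x := (hoff x dx hdx δ).mp hxδ
  have hcy : (δ : ZMod p) = -(dy : ZMod p) * φ y := (hoff y dy hdy δ).mp hyδ
  have hex : ∃ j : ℕ, (j : ZMod p) = (δ : ZMod p) - (m : ZMod p) := by
    refine ⟨δ + m * (p - 1), ?_⟩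
    push_cast [Nat.cast_sub (Nat.one_le_iff_ne_zero.mpr hp.ne')]
    rw [ZMod.natCast_self]
    ring
  have key : ∀ (z : ZMod n) (d : ℤ), d = 1 ∨ d = -1 →
      ((δ : ZMod p) = -(d : ZMod p) * φ z) → ∀ j : ℕ,
      ((z + (d : ZMod n) * (m : ZMod n)) + (d : ZMod n) * (j : ZMod n) ∈ R ↔
        (j : ZMod p) = (δ : ZMod p) - (m : ZMod p)) := by
    intro z d hd hc j
    have h2 : (z + (d : ZMod n) * (m : ZMod n)) + (d : ZMod n) * (j : ZMod n)
        = z + (d : ZMod n) * (((m + j : ℕ) : ZMod n)) := by push_cast; ring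
    rw [h2, hoff z d hd (m + j), ← hc]
    push_cast
    constructor
    · intro h; linear_combination h
    · intro h; linear_combination h
  refine ⟨Nat.find hex, ?_, ?_, ?_, ?_⟩
  · exact (key x dx hdx hcx _).mpr (Nat.find_spec hex)
  · intro j hj h
    exact Nat.find_min hex hj ((key x dx hdx hcx j).mp h)
  · exact (key y dy hdy hcy _).mpr (Nat.find_spec hex)
  · intro j hj h
    exact Nat.find_min hex hj ((key y dy hdy hcy j).mp h)
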